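/- If there exists a boolean function f : {0,1}^n → {0,1} of degree d with block sensitivity b, then there exists a boolean function g : {0,1}^b → {0,1} of degree at most d with g(0)=0 and g(e_i)=1 for every standard basis vector e_i. -/
import Mathlib


open Finset
open scoped Classical

namespace BF

noncomputable section

/-- flip the bits of `x` belonging to `B`. -/
def flipS {n : ℕ} (x : Fin n → Bool) (B : Finset (Fin n)) : Fin n → Bool :=
  fun i => if i ∈ B then !(x i) else x i

/-- flip the `i`-th bit of `x`. -/
def flip1 {n : ℕ} (x : Fin n → Bool) (i : Fin n) : Fin n → Bool :=
  fun j => if j = i then !(x j) else x j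

/-- real value of a boolean. -/
def bval (b : Bool) : ℝ := if b then 1 else 0

/-- coefficient of the monomial `∏_{i ∈ S} x_i` in the unique multilinear
real polynomial expansion of `f` (Möbius inversion over the subcube lattice). -/
def coeffS {n : ℕ} (f : (Fin n → Bool) → ℝ) (S : Finset (Fin n)) : ℝ :=
  ∑ T ∈ S.powerset, (-1 : ℝ) ^ (S.card - T.card) * f (fun i => decide (i ∈ T))

/-- degree of the multilinear expansion of a real-valued function on the cube. -/
def degF {n : ℕ} (f : (Fin n → Bool) → ℝ) : ℕ :=
  (Finset.univ.filter fun S : Finset (Fin n) => coeffS f S ≠ 0).sup Finset.card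

/-- degree of a boolean function. -/
def degB {n : ℕ} (f : (Fin n → Bool) → Bool) : ℕ := degF (fun x => bval (f x))

/-- block sensitivity of `f` at `x`. -/
def bsAt {n : ℕ} (f : (Fin n → Bool) → Bool) (x : Fin n → Bool) : ℕ :=
  (Finset.univ.filter fun 𝓑 : Finset (Finset (Fin n)) =>
      (∀ B ∈ 𝓑, f (flipS x B) ≠ f x) ∧
      ∀ A ∈ 𝓑, ∀ B ∈ 𝓑, A ≠ B → Disjoint A B).sup Finset.card

/-- block sensitivity of `f`. -/
def bs {n : ℕ} (f : (Fin n → Bool) → Bool) : ℕ := Finset.univ.sup (bsAt f)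

/-- sensitivity of `f` at `x`. -/
def sx {n : ℕ} (f : (Fin n → Bool) → Bool) (x : Fin n → Bool) : ℕ :=
  (Finset.univ.filter fun i => f (flip1 x i) ≠ f x).card

/-- (maximum) sensitivity of `f`. -/
def sens {n : ℕ} (f : (Fin n → Bool) → Bool) : ℕ := Finset.univ.sup (sx f)

/-- coordinate `i` is relevant for `f`. -/
def Rel {n : ℕ} (i : Fin n) (f : (Fin n → Bool) → Bool) : Prop :=
  ∃ x, f (flip1 x i) ≠ f x

/-- the set of relevant coordinates of `f`. -/
def relSet {n : ℕ} (f : (Fin n → Bool) → Bool) : Finset (Fin n) :=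
  Finset.univ.filter fun i => Rel i f

/-- the number of relevant variables `n(f)`. -/
def nrel {n : ℕ} (f : (Fin n → Bool) → Bool) : ℕ := (relSet f).card

/-- influence of coordinate `i` on `f` (uniform distribution). -/
def infl {n : ℕ} (f : (Fin n → Bool) → Bool) (i : Fin n) : ℝ :=
  ((Finset.univ.filter fun x : Fin n → Bool => f x ≠ f (flip1 x i)).card : ℝ) / 2 ^ n

/-- total influence `I[f]`. -/
def totalInf {n : ℕ} (f : (Fin n → Bool) → Bool) : ℝ := ∑ i, infl f i

/-- restriction of `f` fixing the coordinates in `H` according to `α`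
(viewed as a function on the full cube not depending on the coordinates in `H`). -/
def restrict {n : ℕ} (f : (Fin n → Bool) → Bool) (H : Finset (Fin n))
    (α : Fin n → Bool) : (Fin n → Bool) → Bool :=
  fun x => f (fun i => if i ∈ H then α i else x i)

/-- certificate complexity of `f` at `x`. -/
def certAt {n : ℕ} (f : (Fin n → Bool) → Bool) (x : Fin n → Bool) : ℕ :=
  sInf {k | ∃ S : Finset (Fin n), S.card = k ∧
    ∀ y, (∀ i ∈ S, y i = x i) → f y = f x}

/-- certificate complexity `C(f)`. -/
def certC {n : ℕ} (f : (Fin n → Bool) → Bool) : ℕ := Finset.univ.sup (certAt f)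

/-- `f` is in standard form: `f(0) = 0` and `f(e_i) = 1` for every basis vector. -/
def stdForm {b : ℕ} (f : (Fin b → Bool) → Bool) : Prop :=
  f (fun _ => false) = false ∧ ∀ i : Fin b, f (fun j => decide (j = i)) = true

end

end BF

open BF


section Aux
variable {n : ℕ}

lemma coeffS_congr (f g : (Fin n → Bool) → ℝ) (h : ∀ x, f x = g x) (S : Finset (Fin n)) :
    coeffS f S = coeffS g S :=
  Finset.sum_congr rfl (fun T _ => by rw [h])

lemma coeffS_add (f g : (Fin n → Bool) → ℝ) (S : Finset (Fin n)) :
    coeffS (fun x => f x + g x) S = coeffS f S + coeffS g S := by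
  unfold coeffS
  rw [← Finset.sum_add_distrib]
  exact Finset.sum_congr rfl (fun T _ => by ring)

lemma coeffS_sum {ι : Type*} (s : Finset ι) (F : ι → (Fin n → Bool) → ℝ) (S : Finset (Fin n)) :
    coeffS (fun x => ∑ i ∈ s, F i x) S = ∑ i ∈ s, coeffS (F i) S := by
  unfold coeffS
  rw [Finset.sum_comm]
  exact Finset.sum_congr rfl fun T _ => by rw [Finset.mul_sum]

lemma coeffS_smul (c : ℝ) (f : (Fin n → Bool) → ℝ) (S : Finset (Fin n)) :
    coeffS (fun x => c * f x) S = c * coeffS f S := by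
  unfold coeffS
  rw [Finset.mul_sum]
  exact Finset.sum_congr rfl (fun T _ => by ring)

lemma neg_one_pow_sub {a c : ℕ} (h : c ≤ a) : (-1 : ℝ) ^ (a - c) = (-1) ^ a * (-1) ^ c := by
  have h1 : (-1 : ℝ) ^ (a - c) * (-1) ^ c = (-1) ^ a := by
    rw [← pow_add]; congr 1; omega
  have h2 : ((-1 : ℝ) ^ c) * ((-1) ^ c) = 1 := by
    rw [← pow_add]; exact Even.neg_one_pow ⟨c, rfl⟩
  calc (-1 : ℝ) ^ (a - c) = (-1) ^ (a - c) * ((-1) ^ c * (-1) ^ c) := by rw [h2, mul_one]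
    _ = (-1) ^ a * (-1) ^ c := by rw [← mul_assoc, h1]

lemma sum_pow_neg_one (X : Finset (Fin n)) :
    ∑ T ∈ X.powerset, (-1 : ℝ) ^ T.card = if X = ∅ then 1 else 0 := by
  have := @Finset.sum_powerset_neg_one_pow_card (Fin n) _ X
  have h2 : ((∑ m ∈ X.powerset, (-1 : ℤ) ^ m.card : ℤ) : ℝ)
      = ∑ T ∈ X.powerset, (-1 : ℝ) ^ T.card := by push_cast; rfl
  rw [← h2, this]
  split <;> norm_num

lemma coeffS_const (c : ℝ) (S : Finset (Fin n)) (hS : S ≠ ∅) :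
    coeffS (fun _ => c) S = 0 := by
  unfold coeffS
  have : ∀ T ∈ S.powerset, (-1 : ℝ) ^ (S.card - T.card) * c
      = ((-1) ^ S.card * c) * (-1) ^ T.card := by
    intro T hT
    rw [neg_one_pow_sub (Finset.card_le_card (Finset.mem_powerset.1 hT))]; ring
  rw [Finset.sum_congr rfl this, ← Finset.mul_sum, sum_pow_neg_one, if_neg hS, mul_zero]

lemma coeffS_junta (h : (Fin n → Bool) → ℝ) (J S : Finset (Fin n))
    (hdep : ∀ y z : Fin n → Bool, (∀ i ∈ J, y i = z i) → h y = h z)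
    (hS : ¬ S ⊆ J) : coeffS h S = 0 := by
  obtain ⟨j, hjS, hjJ⟩ : ∃ j ∈ S, j ∉ J := by
    by_contra hc; push_neg at hc; exact hS hc
  have hj : j ∉ S.erase j := Finset.notMem_erase _ _
  have hins : insert j (S.erase j) = S := Finset.insert_erase hjS
  unfold coeffS
  rw [← hins, Finset.sum_powerset_insert hj]
  rw [← Finset.sum_add_distrib]
  apply Finset.sum_eq_zero
  intro T hT
  have hTS : T ⊆ S.erase j := Finset.mem_powerset.1 hT
  have hjT : j ∉ T := fun hc => hj (hTS hc)
  have hvals : h (fun i => decide (i ∈ T)) = h (fun i => decide (i ∈ insert j T)) := by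
    apply hdep
    intro i hiJ
    have : i ≠ j := fun hc => hjJ (hc ▸ hiJ)
    simp [Finset.mem_insert, this]
  have hcardins : (insert j T).card = T.card + 1 := Finset.card_insert_of_notMem hjT
  have hcardS : (insert j (S.erase j)).card = (S.erase j).card + 1 :=
    Finset.card_insert_of_notMem hj
  have hle : T.card ≤ (S.erase j).card := Finset.card_le_card hTS
  rw [← hvals, hcardins, hcardS]
  have e1 : (S.erase j).card + 1 - T.card = ((S.erase j).card - T.card) + 1 := by omega
  have e2 : (S.erase j).card + 1 - (T.card + 1) = (S.erase j).card - T.card := by omega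
  rw [e1, e2, pow_succ]
  ring

lemma alt_sum (Y T : Finset (Fin n)) (hT : T ⊆ Y) :
    ∑ S ∈ Y.powerset.filter (fun S => T ⊆ S), (-1 : ℝ) ^ (S.card - T.card)
      = if T = Y then 1 else 0 := by
  have key : ∑ S ∈ Y.powerset.filter (fun S => T ⊆ S), (-1 : ℝ) ^ (S.card - T.card)
      = ∑ U ∈ (Y \ T).powerset, (-1 : ℝ) ^ U.card := by
    apply Finset.sum_nbij' (fun S => S \ T) (fun U => T ∪ U)
    · intro S hS
      rw [Finset.mem_filter, Finset.mem_powerset] at hS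
      rw [Finset.mem_powerset]
      exact Finset.sdiff_subset_sdiff hS.1 (le_refl _)
    · intro U hU
      rw [Finset.mem_powerset] at hU
      rw [Finset.mem_filter, Finset.mem_powerset]
      constructor
      · exact Finset.union_subset hT (hU.trans (Finset.sdiff_subset))
      · exact Finset.subset_union_left
    · intro S hS
      rw [Finset.mem_filter] at hS
      exact Finset.union_sdiff_of_subset hS.2
    · intro U hU
      rw [Finset.mem_powerset] at hU
      have : Disjoint T U := Finset.disjoint_of_subset_right hU Finset.disjoint_sdiff
      rw [Finset.union_sdiff_cancel_left this]
    · intro S hS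
      rw [Finset.mem_filter] at hS
      congr 1
      rw [Finset.card_sdiff_of_subset hS.2]
  rw [key, sum_pow_neg_one]
  by_cases hTY : T = Y
  · simp [hTY]
  · rw [if_neg hTY, if_neg]
    intro hc
    exact hTY (Finset.Subset.antisymm hT (by
      intro i hiY
      by_contra hiT
      exact absurd hc (Finset.ne_empty_of_mem (Finset.mem_sdiff.2 ⟨hiY, hiT⟩))))

lemma bval_indicator (x : Fin n → Bool) (S : Finset (Fin n)) :
    (∏ i ∈ S, bval (x i))
      = if S ⊆ Finset.univ.filter (fun i => x i = true) then 1 else 0 := by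
  by_cases h : S ⊆ Finset.univ.filter (fun i => x i = true)
  · rw [if_pos h]
    apply Finset.prod_eq_one
    intro i hi
    have := (Finset.mem_filter.1 (h hi)).2
    simp [bval, this]
  · rw [if_neg h]
    obtain ⟨i, hiS, hif⟩ : ∃ i ∈ S, i ∉ Finset.univ.filter (fun i => x i = true) := by
      by_contra hc; push_neg at hc; exact h hc
    apply Finset.prod_eq_zero hiS
    have : x i ≠ true := by
      intro hc; exact hif (Finset.mem_filter.2 ⟨Finset.mem_univ _, hc⟩)
    simp [bval, this]

lemma interp (f : (Fin n → Bool) → ℝ) (x : Fin n → Bool) :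
    f x = ∑ S : Finset (Fin n), coeffS f S * ∏ i ∈ S, bval (x i) := by
  set X : Finset (Fin n) := Finset.univ.filter (fun i => x i = true) with hX
  have hx : x = fun i => decide (i ∈ X) := by
    funext i
    by_cases h : x i = true <;> simp [hX, h]
  have step1 : ∑ S : Finset (Fin n), coeffS f S * ∏ i ∈ S, bval (x i)
      = ∑ S ∈ X.powerset, coeffS f S := by
    rw [← Finset.sum_filter_add_sum_filter_not Finset.univ (fun S => S ⊆ X)]
    have h2 : ∑ S ∈ Finset.univ.filter (fun S => ¬ S ⊆ X),
        coeffS f S * ∏ i ∈ S, bval (x i) = 0 := by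
      apply Finset.sum_eq_zero
      intro S hS
      rw [bval_indicator, ← hX, if_neg (Finset.mem_filter.1 hS).2, mul_zero]
    rw [h2, add_zero]
    have h3 : Finset.univ.filter (fun S : Finset (Fin n) => S ⊆ X) = X.powerset := by
      ext S; simp [Finset.mem_powerset]
    rw [h3]
    apply Finset.sum_congr rfl
    intro S hS
    rw [bval_indicator, ← hX, if_pos (Finset.mem_powerset.1 hS), mul_one]
  rw [step1]
  unfold coeffS
  have swap : ∑ S ∈ X.powerset, ∑ T ∈ S.powerset,
        (-1 : ℝ) ^ (S.card - T.card) * f (fun i => decide (i ∈ T))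
      = ∑ T ∈ X.powerset, ∑ S ∈ X.powerset,
        (if T ⊆ S then (-1 : ℝ) ^ (S.card - T.card) else 0) * f (fun i => decide (i ∈ T)) := by
    rw [Finset.sum_comm]
    apply Finset.sum_congr rfl
    intro S hS
    rw [Finset.mem_powerset] at hS
    rw [← Finset.sum_filter_add_sum_filter_not X.powerset (fun T => T ⊆ S)]
    have hz : ∑ T ∈ X.powerset.filter (fun T => ¬ T ⊆ S),
        (if T ⊆ S then (-1 : ℝ) ^ (S.card - T.card) else 0) * f (fun i => decide (i ∈ T)) = 0 := by
      apply Finset.sum_eq_zero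
      intro T hT
      rw [if_neg (Finset.mem_filter.1 hT).2, zero_mul]
    rw [hz, add_zero]
    have heq : X.powerset.filter (fun T => T ⊆ S) = S.powerset := by
      ext T
      simp only [Finset.mem_filter, Finset.mem_powerset]
      exact ⟨fun h => h.2, fun h => ⟨h.trans hS, h⟩⟩
    rw [heq]
    apply Finset.sum_congr rfl
    intro T hT
    rw [if_pos (Finset.mem_powerset.1 hT)]
  rw [swap]
  have inner : ∀ T ∈ X.powerset,
      ∑ S ∈ X.powerset, (if T ⊆ S then (-1 : ℝ) ^ (S.card - T.card) else 0)
        * f (fun i => decide (i ∈ T))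
      = (if T = X then 1 else 0) * f (fun i => decide (i ∈ T)) := by
    intro T hT
    rw [← Finset.sum_mul]
    congr 1
    rw [← alt_sum X T (Finset.mem_powerset.1 hT), Finset.sum_filter]
  rw [Finset.sum_congr rfl inner]
  simp only [ite_mul, one_mul, zero_mul]
  rw [Finset.sum_ite_eq' X.powerset X (fun T => f (fun i => decide (i ∈ T)))]
  rw [if_pos (Finset.mem_powerset_self X), hx]

end Aux

/-- from a degree-`d` function with block sensitivity `b` one gets a
function `g : {0,1}^b → {0,1}` of degree at most `d` in standard form. -/
theorem stmt4 {n : ℕ} (f : (Fin n → Bool) → Bool) (d b : ℕ)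
    (hdeg : degB f = d) (hbs : bs f = b) :
    ∃ g : (Fin b → Bool) → Bool, degB g ≤ d ∧
      g (fun _ => false) = false ∧
      ∀ i : Fin b, g (fun j => decide (j = i)) = true := by
  classical
  obtain ⟨x, -, hx⟩ := Finset.exists_mem_eq_sup (Finset.univ : Finset (Fin n → Bool))
    Finset.univ_nonempty (bsAt f)
  have hxb : bsAt f x = b := by rw [← hx]; exact hbs
  set P := Finset.univ.filter (fun 𝓑 : Finset (Finset (Fin n)) =>
      (∀ B ∈ 𝓑, f (flipS x B) ≠ f x) ∧
      ∀ A ∈ 𝓑, ∀ B ∈ 𝓑, A ≠ B → Disjoint A B) with hP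
  have hPne : P.Nonempty := ⟨∅, by simp [hP]⟩
  obtain ⟨𝓑, h𝓑P, h𝓑⟩ := Finset.exists_mem_eq_sup P hPne Finset.card
  have hcard : 𝓑.card = b := by rw [← h𝓑]; exact hxb
  rw [hP, Finset.mem_filter] at h𝓑P
  obtain ⟨-, hflip, hdisj⟩ := h𝓑P
  have hcard' : Fintype.card {B // B ∈ 𝓑} = b := by rw [Fintype.card_coe]; exact hcard
  let e : Fin b ≃ {B // B ∈ 𝓑} := (Fintype.equivFinOfCardEq hcard').symm
  let Bk : Fin b → Finset (Fin n) := fun k => (e k : Finset (Fin n))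
  have hBkmem : ∀ k, Bk k ∈ 𝓑 := fun k => (e k).2
  have hBkinj : Function.Injective Bk := by
    intro k l h
    exact e.injective (Subtype.ext h)
  have hBkdisj : ∀ k l, k ≠ l → Disjoint (Bk k) (Bk l) := fun k l hkl =>
    hdisj _ (hBkmem k) _ (hBkmem l) (fun hc => hkl (hBkinj hc))
  let input : (Fin b → Bool) → (Fin n → Bool) := fun y i =>
    if ∃ k, i ∈ Bk k ∧ y k = true then !(x i) else x i
  let g : (Fin b → Bool) → Bool := fun y => xor (f (input y)) (f x)
  have h0 : input (fun _ => false) = x := by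
    funext i
    simp only [input]
    rw [if_neg]
    rintro ⟨k, -, hk⟩
    exact Bool.false_ne_true hk
  have hgen : ∀ j : Fin b, input (fun k => decide (k = j)) = flipS x (Bk j) := by
    intro j
    funext i
    simp only [input, flipS]
    by_cases hi : i ∈ Bk j
    · rw [if_pos ⟨j, hi, by simp⟩, if_pos hi]
    · rw [if_neg, if_neg hi]
      rintro ⟨k, hik, hk⟩
      have hkj : k = j := of_decide_eq_true hk
      exact hi (hkj ▸ hik)
  refine ⟨g, ?_, ?_, ?_⟩
  · -- degree bound
    let F : (Fin n → Bool) → ℝ := fun z => bval (f z)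
    have hFle : ∀ S : Finset (Fin n), coeffS F S ≠ 0 → S.card ≤ d := by
      intro S hS
      have hmem : S ∈ Finset.univ.filter
          (fun S : Finset (Fin n) => coeffS (fun z => bval (f z)) S ≠ 0) :=
        Finset.mem_filter.2 ⟨Finset.mem_univ _, hS⟩
      have hle := Finset.le_sup (f := Finset.card) hmem
      rw [← hdeg]
      exact hle
    obtain ⟨ε, σ, hrep⟩ : ∃ ε σ : ℝ, ∀ y, bval (g y) = ε + σ * F (input y) := by
      cases hfx : f x with
      | false =>
        refine ⟨0, 1, fun y => ?_⟩
        simp [g, hfx, F]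
      | true =>
        refine ⟨1, -1, fun y => ?_⟩
        cases hgy : f (input y) <;> simp [g, hfx, hgy, F, bval]
    have key : ∀ S' : Finset (Fin b), d < S'.card → coeffS (fun y => bval (g y)) S' = 0 := by
      intro S' hS'
      have hne : S' ≠ ∅ := by
        intro hc
        rw [hc, Finset.card_empty] at hS'
        omega
      have hrw : coeffS (fun y => bval (g y)) S'
          = coeffS (fun y => ε + ∑ S : Finset (Fin n),
              (σ * coeffS F S) * ∏ i ∈ S, bval (input y i)) S' := by
        apply coeffS_congr
        intro y
        rw [hrep y, interp F (input y), Finset.mul_sum]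
        congr 1
        exact Finset.sum_congr rfl fun S _ => by ring
      rw [hrw, coeffS_add (fun _ => ε)
        (fun y => ∑ S : Finset (Fin n), (σ * coeffS F S) * ∏ i ∈ S, bval (input y i)) S',
        coeffS_const ε S' hne, coeffS_sum, zero_add]
      apply Finset.sum_eq_zero
      intro S _
      rw [coeffS_smul (σ * coeffS F S) (fun y => ∏ i ∈ S, bval (input y i)) S']
      by_cases hc : coeffS F S = 0
      · rw [hc, mul_zero, zero_mul]
      · have hSd : S.card ≤ d := hFle S hc
        set J : Finset (Fin b) := Finset.univ.filter (fun k => ∃ i ∈ S, i ∈ Bk k) with hJ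
        have hdep : ∀ y z : Fin b → Bool, (∀ k ∈ J, y k = z k) →
            (∏ i ∈ S, bval (input y i)) = ∏ i ∈ S, bval (input z i) := by
          intro y z hyz
          apply Finset.prod_congr rfl
          intro i hi
          have heq : input y i = input z i := by
            simp only [input]
            have hiff : (∃ k, i ∈ Bk k ∧ y k = true) ↔ (∃ k, i ∈ Bk k ∧ z k = true) := by
              constructor
              · rintro ⟨k, hik, hyk⟩
                have hkJ : k ∈ J := Finset.mem_filter.2 ⟨Finset.mem_univ _, ⟨i, hi, hik⟩⟩
                exact ⟨k, hik, (hyz k hkJ) ▸ hyk⟩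
              · rintro ⟨k, hik, hzk⟩
                have hkJ : k ∈ J := Finset.mem_filter.2 ⟨Finset.mem_univ _, ⟨i, hi, hik⟩⟩
                exact ⟨k, hik, by rw [hyz k hkJ]; exact hzk⟩
            by_cases hcond : ∃ k, i ∈ Bk k ∧ y k = true
            · rw [if_pos hcond, if_pos (hiff.1 hcond)]
            · rw [if_neg hcond, if_neg (fun hh => hcond (hiff.2 hh))]
          rw [heq]
        have hJcard : J.card ≤ S.card := by
          rcases J.eq_empty_or_nonempty with hJe | hJne
          · simp [hJe]
          · obtain ⟨k₀, hk₀⟩ := hJne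
            obtain ⟨-, i₀, hi₀S, -⟩ := Finset.mem_filter.1 hk₀
            have hwex : ∀ k ∈ J, (S ∩ Bk k).Nonempty := by
              intro k hk
              obtain ⟨-, i, hiS, hiB⟩ := Finset.mem_filter.1 hk
              exact ⟨i, Finset.mem_inter.2 ⟨hiS, hiB⟩⟩
            set w : Fin b → Fin n := fun k =>
              if h : (S ∩ Bk k).Nonempty then h.choose else i₀ with hw
            have hwk : ∀ k ∈ J, w k ∈ S ∩ Bk k := by
              intro k hk
              have h := hwex k hk
              simp only [hw, dif_pos h]
              exact h.choose_spec
            apply Finset.card_le_card_of_injOn w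
            · intro k hk
              exact (Finset.mem_inter.1 (hwk k hk)).1
            · intro k hk l hl hwkl
              by_contra hkl
              have h1 : w k ∈ Bk k := (Finset.mem_inter.1 (hwk k hk)).2
              have h2 : w k ∈ Bk l := hwkl ▸ (Finset.mem_inter.1 (hwk l hl)).2
              exact (Finset.disjoint_left.1 (hBkdisj k l hkl)) h1 h2
        have hnot : ¬ S' ⊆ J := by
          intro hsub
          have := Finset.card_le_card hsub
          omega
        rw [coeffS_junta _ J S' hdep hnot, mul_zero]
    show degF (fun y => bval (g y)) ≤ d
    unfold degF
    apply Finset.sup_le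
    intro S' hS'
    rw [Finset.mem_filter] at hS'
    by_contra hgt
    push_neg at hgt
    exact hS'.2 (key S' hgt)
  · show xor (f (input fun _ => false)) (f x) = false
    rw [h0, Bool.xor_self]
  · intro j
    show xor (f (input fun k => decide (k = j))) (f x) = true
    rw [hgen j]
    have := hflip (Bk j) (hBkmem j)
    revert this
    cases f (flipS x (Bk j)) <;> cases f x <;> simp
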